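/- arXiv:2011.02972 — 2 statements merged into one kernel-verified Lean document; each statement's English description precedes it below -/
import Mathlib

section
/- Let A be an invertible real n×n matrix and γ(t) = A e^{−2t} + (1 − e^{−2t})·A(√(AᵀA))⁻¹. Then for all t ≥ 0: γ(t)ᵀγ(t) = (e^{−2t}√(AᵀA) + (1 − e^{−2t})I)², the positive definite square root of γ(t)ᵀγ(t) equals e^{−2t}√(AᵀA) + (1 − e^{−2t})I, and (γ(t)ᵀ)⁻¹·√(γ(t)ᵀγ(t)) = (Aᵀ)⁻¹·√(AᵀA). -/
open Matrix

open scoped Classical in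
/-- The unique positive semidefinite square root of a positive semidefinite real matrix
(junk value `0` on matrices that are not positive semidefinite). -/
noncomputable def psdSqrt {n : ℕ} (X : Matrix (Fin n) (Fin n) ℝ) : Matrix (Fin n) (Fin n) ℝ :=
  if h : X.PosSemidef then
    (h.1.eigenvectorUnitary : Matrix (Fin n) (Fin n) ℝ) *
      diagonal ((↑) ∘ (√·) ∘ h.1.eigenvalues) * (star h.1.eigenvectorUnitary : Matrix (Fin n) (Fin n) ℝ)
  else 0

lemma aux_smul_posDef {n : ℕ} {M : Matrix (Fin n) (Fin n) ℝ} (hM : M.PosDef) {c : ℝ}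
    (hc : 0 < c) : (c • M).PosDef := by
  exact hM.smul hc

lemma aux_smul_posSemidef {n : ℕ} {M : Matrix (Fin n) (Fin n) ℝ} (hM : M.PosSemidef) {c : ℝ}
    (hc : 0 ≤ c) : (c • M).PosSemidef := by
  exact hM.smul hc

lemma aux_psdSqrt_eq_cfc {n : ℕ} {X : Matrix (Fin n) (Fin n) ℝ} (hX : X.PosSemidef) :
    psdSqrt X = cfc Real.sqrt X := by
  rw [psdSqrt, dif_pos hX, hX.1.cfc_eq, IsHermitian.cfc, Unitary.conjStarAlgAut_apply]
  rfl

lemma aux_psdSqrt_posSemidef {n : ℕ} {X : Matrix (Fin n) (Fin n) ℝ} (hX : X.PosSemidef) :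
    (psdSqrt X).PosSemidef := by
  rw [psdSqrt, dif_pos hX]
  have hD : (diagonal ((↑) ∘ (√·) ∘ hX.1.eigenvalues) : Matrix (Fin n) (Fin n) ℝ).PosSemidef :=
    PosSemidef.diagonal (fun _ => Real.sqrt_nonneg _)
  have := hD.mul_mul_conjTranspose_same (hX.1.eigenvectorUnitary : Matrix (Fin n) (Fin n) ℝ)
  simpa [star_eq_conjTranspose] using this

lemma aux_spec_nonneg {n : ℕ} {X : Matrix (Fin n) (Fin n) ℝ} (hX : X.PosSemidef) :
    ∀ x ∈ spectrum ℝ X, 0 ≤ x := fun x hx =>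
  (posSemidef_iff_isHermitian_and_spectrum_nonneg.mp hX).2 hx

lemma aux_psdSqrt_mul_self {n : ℕ} {X : Matrix (Fin n) (Fin n) ℝ} (hX : X.PosSemidef) :
    psdSqrt X * psdSqrt X = X := by
  have hsa : IsSelfAdjoint X := hX.1
  rw [aux_psdSqrt_eq_cfc hX, ← cfc_mul Real.sqrt Real.sqrt X]
  conv_rhs => rw [← cfc_id' ℝ X]
  exact cfc_congr fun x hx => Real.mul_self_sqrt (aux_spec_nonneg hX x hx)

lemma aux_psdSqrt_sq {n : ℕ} {B : Matrix (Fin n) (Fin n) ℝ} (hB : B.PosSemidef) :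
    psdSqrt (B ^ 2) = B := by
  have hsa : IsSelfAdjoint B := hB.1
  rw [aux_psdSqrt_eq_cfc (hB.pow 2), ← cfc_pow_id (R := ℝ) B 2, ← cfc_comp Real.sqrt (· ^ 2) B]
  conv_rhs => rw [← cfc_id' ℝ B]
  exact cfc_congr fun x hx => by
    simp [Real.sqrt_sq (aux_spec_nonneg hB x hx)]

lemma aux_sqrt_posDef {n : ℕ} {M : Matrix (Fin n) (Fin n) ℝ} (hM : M.PosDef) :
    (psdSqrt M).PosDef := by
  have hs := aux_psdSqrt_posSemidef hM.posSemidef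
  refine hs.posDef_iff_isUnit.mpr ?_
  have hu : IsUnit (psdSqrt M * psdSqrt M) := by
    rw [aux_psdSqrt_mul_self hM.posSemidef]; exact hM.isUnit
  exact isUnit_of_mul_isUnit_left hu

/-- Let A be an invertible real n×n matrix and
γ(t) = A e^{−2t} + (1 − e^{−2t})·A(√(AᵀA))⁻¹.  Then for all t ≥ 0:
γ(t)ᵀγ(t) = (e^{−2t}√(AᵀA) + (1 − e^{−2t})I)², the positive definite square root of γ(t)ᵀγ(t)
equals e^{−2t}√(AᵀA) + (1 − e^{−2t})I, and (γ(t)ᵀ)⁻¹·√(γ(t)ᵀγ(t)) = (Aᵀ)⁻¹·√(AᵀA). -/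
theorem gradient_flow_line_identities {n : ℕ} (A : Matrix (Fin n) (Fin n) ℝ)
    (hA : IsUnit A.det) :
    letI γ : ℝ → Matrix (Fin n) (Fin n) ℝ := fun t =>
      Real.exp (-2 * t) • A + (1 - Real.exp (-2 * t)) • (A * (psdSqrt (Aᵀ * A))⁻¹)
    ∀ t : ℝ, 0 ≤ t →
      (γ t)ᵀ * γ t =
        (Real.exp (-2 * t) • psdSqrt (Aᵀ * A) + (1 - Real.exp (-2 * t)) • (1 : Matrix (Fin n) (Fin n) ℝ)) ^ 2 ∧
      psdSqrt ((γ t)ᵀ * γ t) =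
        Real.exp (-2 * t) • psdSqrt (Aᵀ * A) + (1 - Real.exp (-2 * t)) • (1 : Matrix (Fin n) (Fin n) ℝ) ∧
      ((γ t)ᵀ)⁻¹ * psdSqrt ((γ t)ᵀ * γ t) = (Aᵀ)⁻¹ * psdSqrt (Aᵀ * A) := by
  intro t ht
  set γ : ℝ → Matrix (Fin n) (Fin n) ℝ := fun t =>
    Real.exp (-2 * t) • A + (1 - Real.exp (-2 * t)) • (A * (psdSqrt (Aᵀ * A))⁻¹) with hγdef
  -- AᵀA is positive definite
  have hsemi : (Aᵀ * A).PosSemidef := by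
    have := posSemidef_conjTranspose_mul_self A
    rwa [conjTranspose_eq_transpose_of_trivial] at this
  have hAAt : (Aᵀ * A).PosDef := by
    refine posDef_iff_dotProduct_mulVec.mpr ⟨hsemi.1, fun x hx => ?_⟩
    refine lt_of_le_of_ne ((posSemidef_iff_dotProduct_mulVec.mp hsemi).2 x) fun h => ?_
    have h0 : (Aᵀ * A) *ᵥ x = 0 := (hsemi.dotProduct_mulVec_zero_iff x).mp h.symm
    have hU : IsUnit (Aᵀ * A).det := by
      rw [det_mul, det_transpose]; exact hA.mul hA
    have := mulVec_injective_iff_isUnit.mpr ((Matrix.isUnit_iff_isUnit_det _).mpr hU)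
    exact hx (this (show _ *ᵥ x = _ *ᵥ 0 by rw [h0, mulVec_zero]))
  set S : Matrix (Fin n) (Fin n) ℝ := psdSqrt (Aᵀ * A) with hSdef
  have hSeq : S = psdSqrt (Aᵀ * A) := hSdef
  have hS : S.PosDef := by
    rw [hSeq]
    exact aux_sqrt_posDef hAAt
  have hSS : S * S = Aᵀ * A := by rw [hSeq]; exact aux_psdSqrt_mul_self hsemi
  have hSsymm : Sᵀ = S := by
    rw [← conjTranspose_eq_transpose_of_trivial]
    exact hS.1
  have hSdet : IsUnit S.det := isUnit_iff_ne_zero.mpr (ne_of_gt hS.det_pos)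
  have hSinv : S⁻¹ * S = 1 := nonsing_inv_mul S hSdet
  have hSinv' : S * S⁻¹ = 1 := mul_nonsing_inv S hSdet
  set e : ℝ := Real.exp (-2 * t) with hedef
  have he : 0 < e := Real.exp_pos _
  have he1 : e ≤ 1 := Real.exp_le_one_iff.mpr (by nlinarith)
  set B : Matrix (Fin n) (Fin n) ℝ := e • S + (1 - e) • (1 : Matrix (Fin n) (Fin n) ℝ)
    with hBdef
  have hB : B.PosDef :=
    (aux_smul_posDef hS he).add_posSemidef
      (aux_smul_posSemidef Matrix.PosSemidef.one (by linarith))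
  have hBsymm : Bᵀ = B := by
    rw [hBdef, transpose_add, transpose_smul, transpose_smul, hSsymm, transpose_one]
  have hBdet : IsUnit B.det := isUnit_iff_ne_zero.mpr (ne_of_gt hB.det_pos)
  -- factor γ t
  have hγ : γ t = A * S⁻¹ * B := by
    show e • A + (1 - e) • (A * S⁻¹) = A * S⁻¹ * B
    rw [hBdef, mul_add, mul_smul_comm, mul_smul_comm, mul_one, mul_assoc, hSinv, mul_one]
  have hγT : (γ t)ᵀ = B * S⁻¹ * Aᵀ := by
    rw [hγ, transpose_mul, transpose_mul, transpose_nonsing_inv, hSsymm, hBsymm, mul_assoc]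
  -- first identity
  have h1 : (γ t)ᵀ * γ t = B ^ 2 := by
    rw [hγT, hγ]
    calc B * S⁻¹ * Aᵀ * (A * S⁻¹ * B)
        = B * (S⁻¹ * (Aᵀ * A) * S⁻¹) * B := by simp only [mul_assoc]
      _ = B ^ 2 := by
          rw [← hSS, ← mul_assoc S⁻¹ S S, hSinv, one_mul, hSinv', mul_one, sq]
  have hB2semi : (B ^ 2).PosSemidef := hB.posSemidef.pow 2
  have h2 : psdSqrt ((γ t)ᵀ * γ t) = B := by
    rw [h1]
    exact aux_psdSqrt_sq hB.posSemidef
  refine ⟨h1, h2, ?_⟩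
  -- third identity
  have hγTdet : IsUnit ((γ t)ᵀ).det := by
    rw [hγT, det_mul, det_mul, det_transpose, det_nonsing_inv]
    exact (hBdet.mul (isUnit_ringInverse.mpr hSdet)).mul hA
  have hkey : (γ t)ᵀ * ((Aᵀ)⁻¹ * S) = B := by
    rw [hγT]
    have hAT : Aᵀ * (Aᵀ)⁻¹ = 1 := mul_nonsing_inv _ (by rwa [det_transpose])
    rw [mul_assoc, ← mul_assoc Aᵀ, hAT, one_mul, mul_assoc, hSinv, mul_one]
  rw [h2, ← hkey, ← mul_assoc, nonsing_inv_mul _ hγTdet, one_mul]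
end

section
/- The map H : GL(n,ℝ) × [0,1] → M(n,ℝ) defined by H(A,t) = (1−t)A + t·A(√(AᵀA))⁻¹ is a strong deformation retraction of GL(n,ℝ) onto O(n,ℝ): for every A ∈ GL(n,ℝ) and t ∈ [0,1] the matrix H(A,t) is invertible, H is continuous, H(A,0) = A, H(A,1) = A(√(AᵀA))⁻¹ ∈ O(n,ℝ), and H(B,t) = B for all B ∈ O(n,ℝ) and all t ∈ [0,1]. -/
open Matrix

namespace DefRetAux

open Filter Topology

variable {n : ℕ}

lemma posSemidef_tmul (A : Matrix (Fin n) (Fin n) ℝ) : (Aᵀ * A).PosSemidef := by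
  simpa [conjTranspose_eq_transpose_of_trivial] using posSemidef_conjTranspose_mul_self A

lemma posDef_tmul (A : Matrix (Fin n) (Fin n) ℝ) (hA : IsUnit A.det) : (Aᵀ * A).PosDef := by
  refine PosDef.of_dotProduct_mulVec_pos (posSemidef_tmul A).1 fun x hx => ?_
  have hAx : A *ᵥ x ≠ 0 := by
    intro h
    apply hx
    have := congrArg (fun v => A⁻¹ *ᵥ v) h
    simpa [mulVec_mulVec, Matrix.nonsing_inv_mul A hA] using this
  have key : star x ⬝ᵥ (Aᵀ * A) *ᵥ x = (A *ᵥ x) ⬝ᵥ (A *ᵥ x) := by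
    rw [← mulVec_mulVec, Matrix.dotProduct_mulVec, star_trivial, vecMul_transpose]
  rw [key]
  rcases (Finset.sum_nonneg fun i _ => mul_self_nonneg ((A *ᵥ x) i)).lt_or_eq with h | h
  · exact h
  · exact absurd (dotProduct_self_eq_zero.mp h.symm) hAx

open scoped MatrixOrder in
lemma psdSqrt_eq {P : Matrix (Fin n) (Fin n) ℝ} (hP : P.PosSemidef) :
    psdSqrt P = CFC.sqrt P := by
  rw [psdSqrt, dif_pos hP, CFC.sqrt_eq_real_sqrt P hP.nonneg, cfcₙ_eq_cfc, hP.1.cfc_eq,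
    IsHermitian.cfc]
  rfl

open scoped MatrixOrder in
lemma psdSqrt_posSemidef {P : Matrix (Fin n) (Fin n) ℝ} (hP : P.PosSemidef) :
    (psdSqrt P).PosSemidef := by
  rw [psdSqrt_eq hP]; exact (CFC.sqrt_nonneg P).posSemidef

open scoped MatrixOrder in
lemma psdSqrt_mul_self {P : Matrix (Fin n) (Fin n) ℝ} (hP : P.PosSemidef) :
    psdSqrt P * psdSqrt P = P := by
  rw [psdSqrt_eq hP]; exact CFC.sqrt_mul_sqrt_self P hP.nonneg

open scoped MatrixOrder in
lemma posDef_of_isUnit_det {S : Matrix (Fin n) (Fin n) ℝ} (hS : S.PosSemidef)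
    (h : IsUnit S.det) : S.PosDef := by
  obtain ⟨B, rfl⟩ := CStarAlgebra.nonneg_iff_eq_star_mul_self.mp hS.nonneg
  rw [star_eq_conjTranspose, conjTranspose_eq_transpose_of_trivial] at h ⊢
  have hB : IsUnit B.det := by
    rw [det_mul, det_transpose] at h
    exact isUnit_of_mul_isUnit_left h
  exact posDef_tmul B hB

lemma psdSqrt_posDef {P : Matrix (Fin n) (Fin n) ℝ} (hP : P.PosDef) :
    (psdSqrt P).PosDef := by
  refine posDef_of_isUnit_det (psdSqrt_posSemidef hP.posSemidef) ?_
  have : (psdSqrt P).det * (psdSqrt P).det = P.det := by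
    rw [← det_mul, psdSqrt_mul_self hP.posSemidef]
  have hu : IsUnit P.det := hP.det_pos.ne'.isUnit
  rw [← this] at hu
  exact isUnit_of_mul_isUnit_left hu

open scoped MatrixOrder in
lemma psdSqrt_one : psdSqrt (1 : Matrix (Fin n) (Fin n) ℝ) = 1 := by
  rw [psdSqrt_eq Matrix.PosSemidef.one]
  exact CFC.sqrt_one

lemma single_dot (S : Matrix (Fin n) (Fin n) ℝ) (i j : Fin n) (a b : ℝ) :
    Pi.single i a ⬝ᵥ S *ᵥ Pi.single j b = a * (S i j * b) := by
  simp [dotProduct, mulVec, Pi.single_apply, Finset.mul_sum, mul_comm]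

lemma diag_nonneg {S : Matrix (Fin n) (Fin n) ℝ} (hS : S.PosSemidef) (i : Fin n) :
    0 ≤ S i i := by
  have := hS.dotProduct_mulVec_nonneg (Pi.single i 1)
  simpa [single_dot] using this

lemma diag_le_trace {S : Matrix (Fin n) (Fin n) ℝ} (hS : S.PosSemidef) (i : Fin n) :
    S i i ≤ S.trace :=
  Finset.single_le_sum (fun j _ => diag_nonneg hS j) (Finset.mem_univ i)

lemma abs_entry_le_trace {S : Matrix (Fin n) (Fin n) ℝ} (hS : S.PosSemidef) (i j : Fin n) :
    |S i j| ≤ S.trace := by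
  rcases eq_or_ne i j with rfl | hij
  · rw [abs_of_nonneg (diag_nonneg hS i)]; exact diag_le_trace hS i
  have hsym : S j i = S i j := by
    have h := hS.1
    calc S j i = Sᵀ i j := rfl
    _ = S i j := by rw [← conjTranspose_eq_transpose_of_trivial, h]
  have key : ∀ c : ℝ, 0 ≤ S i i + (c * (S i j + S j i) + c * c * S j j) := by
    intro c
    have := hS.dotProduct_mulVec_nonneg (Pi.single i 1 + Pi.single j c)
    simp only [star_trivial, mulVec_add, dotProduct_add, add_dotProduct, single_dot] at this
    linarith [this]
  have h1 := key 1
  have h2 := key (-1)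
  have hii := diag_le_trace hS i
  have hjj := diag_le_trace hS j
  have htr : S i i + S j j ≤ 2 * S.trace := by linarith
  rw [abs_le]
  constructor <;> nlinarith [hsym]

lemma trace_le_sqrt {S : Matrix (Fin n) (Fin n) ℝ} (hS : S.PosSemidef) :
    S.trace ≤ Real.sqrt (n * (S * S).trace) := by
  refine Real.le_sqrt_of_sq_le ?_
  have hsym : ∀ i j, S j i = S i j := fun i j => by
    calc S j i = Sᵀ i j := rfl
    _ = S i j := by rw [← conjTranspose_eq_transpose_of_trivial, hS.1]
  have h1 : (S * S).trace = ∑ i, ∑ j, S i j ^ 2 := by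
    simp only [Matrix.trace, Matrix.diag, Matrix.mul_apply]
    refine Finset.sum_congr rfl fun i _ => Finset.sum_congr rfl fun j _ => ?_
    rw [hsym i j, sq]
  have h2 : ∑ i, S i i ^ 2 ≤ ∑ i, ∑ j, S i j ^ 2 := by
    refine Finset.sum_le_sum fun i _ => ?_
    exact Finset.single_le_sum (f := fun j => S i j ^ 2) (fun j _ => sq_nonneg _)
      (Finset.mem_univ i)
  have h3 : S.trace ^ 2 ≤ (n : ℝ) * ∑ i, S i i ^ 2 := by
    have := sq_sum_le_card_mul_sum_sq (s := (Finset.univ : Finset (Fin n)))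
      (f := fun i => S i i)
    simpa [Matrix.trace, Matrix.diag] using this
  rw [h1]
  nlinarith [h2, h3]

lemma isClosed_posSemidef : IsClosed {M : Matrix (Fin n) (Fin n) ℝ | M.PosSemidef} := by
  have h1 : IsClosed {M : Matrix (Fin n) (Fin n) ℝ | M.IsHermitian} := by
    have : {M : Matrix (Fin n) (Fin n) ℝ | M.IsHermitian}
        = {M : Matrix (Fin n) (Fin n) ℝ | Mᴴ = M} := rfl
    rw [this]
    exact isClosed_eq (continuous_id.matrix_conjTranspose) continuous_id
  have h2 : IsClosed (⋂ x : Fin n → ℝ,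
      {M : Matrix (Fin n) (Fin n) ℝ | 0 ≤ star x ⬝ᵥ M *ᵥ x}) := by
    refine isClosed_iInter fun x => isClosed_le continuous_const ?_
    exact continuous_const.dotProduct (continuous_id.matrix_mulVec continuous_const)
  have : {M : Matrix (Fin n) (Fin n) ℝ | M.PosSemidef}
      = {M : Matrix (Fin n) (Fin n) ℝ | M.IsHermitian} ∩
        ⋂ x : Fin n → ℝ, {M : Matrix (Fin n) (Fin n) ℝ | 0 ≤ star x ⬝ᵥ M *ᵥ x} := by
    ext M
    simp only [Set.mem_setOf_eq, Set.mem_inter_iff, Set.mem_iInter]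
    exact ⟨fun h => ⟨h.1, h.dotProduct_mulVec_nonneg⟩,
      fun h => PosSemidef.of_dotProduct_mulVec_nonneg h.1 h.2⟩
  rw [this]
  exact h1.inter h2

lemma isCompact_box (C : ℝ) :
    IsCompact {M : Matrix (Fin n) (Fin n) ℝ | ∀ i j, M i j ∈ Set.Icc (-C) C} := by
  have : {M : Matrix (Fin n) (Fin n) ℝ | ∀ i j, M i j ∈ Set.Icc (-C) C}
      = Set.univ.pi fun _ : Fin n => Set.univ.pi fun _ : Fin n => Set.Icc (-C) C := by
    ext M
    exact ⟨fun h i _ j _ => h i j, fun h i j => h i (Set.mem_univ i) j (Set.mem_univ j)⟩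
  rw [this]
  exact isCompact_univ_pi fun i => isCompact_univ_pi fun j => isCompact_Icc

lemma abs_psdSqrt_entry_le {Q : Matrix (Fin n) (Fin n) ℝ} (hQ : Q.PosSemidef) (i j : Fin n) :
    |psdSqrt Q i j| ≤ Real.sqrt (n * Q.trace) := by
  refine (abs_entry_le_trace (psdSqrt_posSemidef hQ) i j).trans ?_
  have := trace_le_sqrt (psdSqrt_posSemidef hQ)
  rwa [psdSqrt_mul_self hQ] at this

open scoped MatrixOrder in
lemma continuousOn_psdSqrt :
    ContinuousOn psdSqrt {P : Matrix (Fin n) (Fin n) ℝ | P.PosSemidef} := by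
  intro P hP
  have hPP : P.PosSemidef := hP
  haveI : FirstCountableTopology (Matrix (Fin n) (Fin n) ℝ) :=
    inferInstanceAs (FirstCountableTopology (Fin n → Fin n → ℝ))
  rw [ContinuousWithinAt]
  apply tendsto_of_subseq_tendsto
  intro ns hns
  have h1 : Tendsto ns atTop (𝓝 P) := hns.mono_right nhdsWithin_le_nhds
  have h2 : ∀ᶠ k in atTop, (ns k).PosSemidef := hns.eventually_mem self_mem_nhdsWithin
  have htr : Tendsto (fun k => (ns k).trace) atTop (𝓝 P.trace) :=
    ((continuous_id.matrix_trace).tendsto P).comp h1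
  have h3 : ∀ᶠ k in atTop, (ns k).trace ≤ P.trace + 1 := by
    filter_upwards [htr.eventually_lt_const (lt_add_one P.trace)] with k hk using hk.le
  obtain ⟨N, hN⟩ := eventually_atTop.mp (h2.and h3)
  set C := Real.sqrt (n * (P.trace + 1)) with hC
  set K := {M : Matrix (Fin n) (Fin n) ℝ | ∀ i j, M i j ∈ Set.Icc (-C) C} with hK
  have hmem : ∀ k, psdSqrt (ns (k + N)) ∈ K := by
    intro k i j
    have hpsd := (hN (k + N) (Nat.le_add_left N k)).1
    have hle := (hN (k + N) (Nat.le_add_left N k)).2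
    have hb := abs_psdSqrt_entry_le hpsd i j
    have hb2 : Real.sqrt (n * (ns (k + N)).trace) ≤ C := by
      apply Real.sqrt_le_sqrt
      have : (0:ℝ) ≤ n := Nat.cast_nonneg n
      nlinarith
    rw [Set.mem_Icc, ← abs_le]
    exact hb.trans hb2
  obtain ⟨L, hLK, φ, hφmono, hφ⟩ := (isCompact_box C).tendsto_subseq hmem
  have hshift : Tendsto (fun k => ns (φ k + N)) atTop (𝓝 P) := by
    refine h1.comp ?_
    refine tendsto_atTop_mono (fun k => ?_) tendsto_id
    calc (k:ℕ) ≤ φ k := hφmono.le_apply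
    _ ≤ φ k + N := Nat.le_add_right _ _
  have hLpsd : L.PosSemidef := by
    refine isClosed_posSemidef.mem_of_tendsto hφ ?_
    exact Eventually.of_forall fun k => psdSqrt_posSemidef (hN (φ k + N) (Nat.le_add_left N _)).1
  have hLsq : L * L = P := by
    have hmul : Tendsto (fun k => psdSqrt (ns (φ k + N)) * psdSqrt (ns (φ k + N)))
        atTop (𝓝 (L * L)) := by
      have hc : Continuous fun M : Matrix (Fin n) (Fin n) ℝ => M * M :=
        continuous_id.matrix_mul continuous_id
      exact (hc.tendsto L).comp hφ
    have heq : (fun k => psdSqrt (ns (φ k + N)) * psdSqrt (ns (φ k + N)))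
        = fun k => ns (φ k + N) := by
      funext k
      exact psdSqrt_mul_self (hN (φ k + N) (Nat.le_add_left N _)).1
    rw [heq] at hmul
    exact tendsto_nhds_unique hmul hshift
  have hL : L = psdSqrt P := by
    rw [psdSqrt_eq hPP]
    exact ((CFC.sqrt_eq_iff P L hPP.nonneg hLpsd.nonneg).mpr hLsq).symm
  exact ⟨fun k => φ k + N, hL ▸ hφ⟩

lemma posSemidef_smul {S : Matrix (Fin n) (Fin n) ℝ} (hS : S.PosSemidef) {c : ℝ}
    (hc : 0 ≤ c) : (c • S).PosSemidef := by
  refine PosSemidef.of_dotProduct_mulVec_nonneg ?_ fun x => ?_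
  · have := hS.1
    rw [IsHermitian, conjTranspose_smul, this, star_trivial]
  · rw [smul_mulVec, dotProduct_smul, smul_eq_mul]
    exact mul_nonneg hc (hS.dotProduct_mulVec_nonneg x)

lemma posDef_smul {S : Matrix (Fin n) (Fin n) ℝ} (hS : S.PosDef) {c : ℝ}
    (hc : 0 < c) : (c • S).PosDef := by
  refine PosDef.of_dotProduct_mulVec_pos (posSemidef_smul hS.posSemidef hc.le).1 fun x hx => ?_
  rw [smul_mulVec, dotProduct_smul, smul_eq_mul]
  exact mul_pos hc (hS.dotProduct_mulVec_pos hx)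

lemma combo_posDef {S : Matrix (Fin n) (Fin n) ℝ} (hS : S.PosDef) {t : ℝ}
    (ht : t ∈ Set.Icc (0:ℝ) 1) :
    ((1 - t) • (1 : Matrix (Fin n) (Fin n) ℝ) + t • S⁻¹).PosDef := by
  obtain ⟨ht0, ht1⟩ := ht
  rcases eq_or_lt_of_le ht1 with rfl | hlt
  · simpa using Matrix.PosDef.posSemidef_add (posSemidef_smul Matrix.PosSemidef.zero le_rfl)
      hS.inv
  · exact Matrix.PosDef.add_posSemidef (posDef_smul Matrix.PosDef.one (by linarith))
      (posSemidef_smul hS.inv.posSemidef ht0)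

lemma H_eq (A : Matrix (Fin n) (Fin n) ℝ) (t : ℝ) :
    (1 - t) • A + t • (A * (psdSqrt (Aᵀ * A))⁻¹)
      = A * ((1 - t) • (1 : Matrix (Fin n) (Fin n) ℝ) + t • (psdSqrt (Aᵀ * A))⁻¹) := by
  rw [Matrix.mul_add, mul_smul_comm, mul_smul_comm, Matrix.mul_one]

end DefRetAux

open DefRetAux Filter Topology

/-- The map H(A,t) = (1−t)A + t·A(√(AᵀA))⁻¹ is a strong deformation retraction of
GL(n,ℝ) onto O(n,ℝ): H(A,t) is invertible for A ∈ GL(n,ℝ) and t ∈ [0,1], H is continuous on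
GL(n,ℝ) × [0,1], H(A,0) = A, H(A,1) = A(√(AᵀA))⁻¹ ∈ O(n,ℝ), and H(B,t) = B for all
B ∈ O(n,ℝ) and t ∈ [0,1]. -/
theorem deformation_retraction_GL_onto_O {n : ℕ} :
    letI H : Matrix (Fin n) (Fin n) ℝ → ℝ → Matrix (Fin n) (Fin n) ℝ := fun A t =>
      (1 - t) • A + t • (A * (psdSqrt (Aᵀ * A))⁻¹)
    (∀ A : Matrix (Fin n) (Fin n) ℝ, IsUnit A.det →
      ∀ t ∈ Set.Icc (0 : ℝ) 1, IsUnit (H A t).det) ∧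
    ContinuousOn (fun p : Matrix (Fin n) (Fin n) ℝ × ℝ => H p.1 p.2)
      ({A : Matrix (Fin n) (Fin n) ℝ | IsUnit A.det} ×ˢ Set.Icc (0 : ℝ) 1) ∧
    (∀ A : Matrix (Fin n) (Fin n) ℝ, H A 0 = A) ∧
    (∀ A : Matrix (Fin n) (Fin n) ℝ, IsUnit A.det →
      H A 1 = A * (psdSqrt (Aᵀ * A))⁻¹ ∧
      (A * (psdSqrt (Aᵀ * A))⁻¹)ᵀ * (A * (psdSqrt (Aᵀ * A))⁻¹) = 1) ∧
    (∀ B : Matrix (Fin n) (Fin n) ℝ, Bᵀ * B = 1 → ∀ t ∈ Set.Icc (0 : ℝ) 1, H B t = B) := by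
  refine ⟨?_, ?_, ?_, ?_, ?_⟩
  · -- invertibility
    intro A hA t ht
    have hS : (psdSqrt (Aᵀ * A)).PosDef := psdSqrt_posDef (posDef_tmul A hA)
    have hM := combo_posDef hS ht
    show IsUnit ((1 - t) • A + t • (A * (psdSqrt (Aᵀ * A))⁻¹)).det
    rw [H_eq, det_mul]
    exact hA.mul hM.det_pos.ne'.isUnit
  · -- continuity
    have hsqrt_cont : ContinuousOn (fun A : Matrix (Fin n) (Fin n) ℝ => psdSqrt (Aᵀ * A))
        {A : Matrix (Fin n) (Fin n) ℝ | IsUnit A.det} := by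
      refine continuousOn_psdSqrt.comp ?_ ?_
      · exact ((continuous_id.matrix_transpose).matrix_mul continuous_id).continuousOn
      · exact fun A _ => posSemidef_tmul A
    have hinv_cont : ContinuousOn (fun A : Matrix (Fin n) (Fin n) ℝ => (psdSqrt (Aᵀ * A))⁻¹)
        {A : Matrix (Fin n) (Fin n) ℝ | IsUnit A.det} := by
      intro A hA
      have hS : (psdSqrt (Aᵀ * A)).PosDef := psdSqrt_posDef (posDef_tmul A hA)
      have h1 : ContinuousAt Inv.inv (psdSqrt (Aᵀ * A)) := by
        apply continuousAt_matrix_inv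
        rw [Ring.inverse_eq_inv']
        exact continuousAt_inv₀ hS.det_pos.ne'
      exact ContinuousAt.comp_continuousWithinAt (f := fun A : Matrix (Fin n) (Fin n) ℝ =>
        psdSqrt (Aᵀ * A)) h1 (hsqrt_cont A hA)
    refine ContinuousOn.add ?_ ?_
    · exact ((continuous_const.sub continuous_snd).smul continuous_fst).continuousOn
    · refine ContinuousOn.smul continuous_snd.continuousOn ?_
      refine ContinuousOn.mul continuous_fst.continuousOn ?_
      exact hinv_cont.comp continuous_fst.continuousOn fun p hp => hp.1
  · -- H A 0 = A
    intro A
    show (1 - 0 : ℝ) • A + (0:ℝ) • (A * (psdSqrt (Aᵀ * A))⁻¹) = A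
    simp
  · -- H A 1 and orthogonality
    intro A hA
    constructor
    · show (1 - 1 : ℝ) • A + (1:ℝ) • (A * (psdSqrt (Aᵀ * A))⁻¹) = A * (psdSqrt (Aᵀ * A))⁻¹
      simp
    · set S := psdSqrt (Aᵀ * A) with hSdef
      have hS : S.PosDef := psdSqrt_posDef (posDef_tmul A hA)
      have hdet : IsUnit S.det := hS.det_pos.ne'.isUnit
      have hsym : Sᵀ = S := by
        rw [← conjTranspose_eq_transpose_of_trivial, hS.posSemidef.1]
      calc (A * S⁻¹)ᵀ * (A * S⁻¹) = (S⁻¹ᵀ * Aᵀ) * (A * S⁻¹) := by rw [transpose_mul]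
      _ = S⁻¹ * ((Aᵀ * A) * S⁻¹) := by
          rw [transpose_nonsing_inv, hsym, Matrix.mul_assoc, Matrix.mul_assoc]
      _ = S⁻¹ * (S * (S * S⁻¹)) := by
          rw [← psdSqrt_mul_self (posSemidef_tmul A), ← hSdef, Matrix.mul_assoc]
      _ = 1 := by
          rw [Matrix.mul_nonsing_inv _ hdet, Matrix.mul_one, Matrix.nonsing_inv_mul _ hdet]
  · -- orthogonal matrices are fixed
    intro B hB t _
    show (1 - t) • B + t • (B * (psdSqrt (Bᵀ * B))⁻¹) = B
    rw [hB, psdSqrt_one, inv_one, Matrix.mul_one, ← add_smul, sub_add_cancel, one_smul]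
end
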